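/- Let x = (√7 − i)/(2√2) ∈ ℂ, where √7 and √2 are the positive real square roots and i = √(−1). Then: (i) 2x⁴ − 3x² + 2 = 0; (ii) |x| = 1; (iii) x is not integral over ℤ (its minimal polynomial over ℚ is x⁴ − (3/2)x² + 1, which is not monic with integer coefficients); and (iv) x is not a root of unity, i.e. x^m ≠ 1 for every integer m ≥ 1. -/

import Mathlib

/-- **A central charge of modulus one that is not a root of unity** (Example 3.3 of the
paper, the third central charge of `C(g₂, 3)`).  For `x = (√7 − i)/(2√2)`:
(i) `2x⁴ − 3x² + 2 = 0`; (ii) `|x| = 1`; (iii) `x` is not integral over `ℤ`; and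
(iv) `x` is not a root of unity. -/
theorem central_charge_g2_not_root_of_unity
    (x : ℂ)
    (hx : x = ((Real.sqrt 7 : ℂ) - Complex.I) / (2 * (Real.sqrt 2 : ℂ))) :
    2 * x ^ 4 - 3 * x ^ 2 + 2 = 0 ∧
    ‖x‖ = 1 ∧
    ¬ IsIntegral ℤ x ∧
    ∀ m : ℕ, 1 ≤ m → x ^ m ≠ 1 := by
  have h7 : ((Real.sqrt 7 : ℝ) : ℂ) ^ 2 = 7 := by
    norm_cast
    rw [Real.sq_sqrt] <;> norm_num
  have h2 : ((Real.sqrt 2 : ℝ) : ℂ) ^ 2 = 2 := by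
    norm_cast
    rw [Real.sq_sqrt] <;> norm_num
  have hb : (2 * (Real.sqrt 2 : ℂ)) ≠ 0 := by
    simp only [mul_ne_zero_iff, Complex.ofReal_ne_zero]
    constructor
    · norm_num
    · positivity
  have hx2 : x ^ 2 = (3 - (Real.sqrt 7 : ℂ) * Complex.I) / 4 := by
    rw [hx, div_pow]
    rw [div_eq_div_iff (pow_ne_zero _ hb) (by norm_num)]
    linear_combination (4 : ℂ) * h7 + (4 * (Real.sqrt 7 : ℂ) * Complex.I - 12) * h2 + 4 * Complex.I_sq
  have hi : 2 * x ^ 4 - 3 * x ^ 2 + 2 = 0 := by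
    have : x ^ 4 = (x ^ 2) ^ 2 := by ring
    rw [this, hx2]
    field_simp
    linear_combination (2 * Complex.I ^ 2 : ℂ) * h7 + (14 : ℂ) * Complex.I_sq
  have hconj : (starRingEnd ℂ) x = ((Real.sqrt 7 : ℂ) + Complex.I) / (2 * (Real.sqrt 2 : ℂ)) := by
    rw [hx]
    simp only [map_div₀, map_sub, map_mul, map_ofNat, Complex.conj_ofReal, Complex.conj_I]
    ring
  have hmul : x * (starRingEnd ℂ) x = 1 := by
    rw [hconj, hx, div_mul_div_comm]
    rw [div_eq_one_iff_eq (by exact mul_ne_zero hb hb)]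
    linear_combination h7 - (4 : ℂ) * h2 - Complex.I_sq
  have hns : Complex.normSq x = 1 := by
    have := Complex.mul_conj x
    rw [hmul] at this
    exact_mod_cast this.symm
  have habs : ‖x‖ = 1 := by
    rw [Complex.norm_def, hns, Real.sqrt_one]
  have hni : ¬ IsIntegral ℤ x := by
    intro hix
    have hsq : IsIntegral ℤ (x ^ 2) := hix.pow 2
    have hcsq : IsIntegral ℤ ((starRingEnd ℂ) (x ^ 2)) :=
      hsq.map (starRingEnd ℂ).toIntAlgHom
    have hsum : IsIntegral ℤ (x ^ 2 + (starRingEnd ℂ) (x ^ 2)) := hsq.add hcsq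
    have heq : x ^ 2 + (starRingEnd ℂ) (x ^ 2) = (3 / 2 : ℂ) := by
      rw [hx2]
      simp only [map_div₀, map_sub, map_mul, map_ofNat, Complex.conj_ofReal, Complex.conj_I]
      ring
    rw [heq] at hsum
    have hcast : (algebraMap ℚ ℂ) ((3 : ℚ) / 2) = (3 / 2 : ℂ) := by
      simp [map_div₀]
    have h32 : IsIntegral ℤ ((3 : ℚ) / 2) := by
      rw [← isIntegral_algebraMap_iff (R := ℤ) (algebraMap ℚ ℂ).injective, hcast]
      exact hsum
    obtain ⟨n, hn⟩ := IsIntegrallyClosed.isIntegral_iff.mp h32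
    have : (n : ℚ) = 3 / 2 := by exact_mod_cast hn
    have : (2 * n : ℚ) = 3 := by linarith
    have : (2 * n : ℤ) = 3 := by exact_mod_cast this
    omega
  refine ⟨hi, habs, hni, ?_⟩
  intro m hm hpow
  apply hni
  refine ⟨Polynomial.X ^ m - Polynomial.C 1, ?_, ?_⟩
  · exact Polynomial.monic_X_pow_sub_C 1 (by omega)
  · simp [Polynomial.eval₂_sub, hpow]
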